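/- Let λ ∈ X, let λ⁺ be the unique dominant weight in the W-orbit of λ, and let w ∈ W be the element of minimal length with λ = wλ⁺. Then λ is a Steinberg weight (i.e. λ = e_v for some v ∈ W; in that case necessarily v = w⁻¹) if and only if (λ⁺, α_j∨) ≤ 1 for every simple root α_j and, whenever (λ⁺, α_j∨) = 1, the root w(α_j) is negative. -/

import Mathlib

open scoped InnerProductSpace Classical

noncomputable section

/-- A reduced crystallographic root system `Φ` spanning a finite-dimensional real inner
product space `V`, together with a choice of simple roots `π` (determining the positive
system), the corresponding fundamental weights `ω`, the reflections `s`, the Weyl group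
`W` and the weight lattice `X`. -/
structure RootSystemData (V : Type) [NormedAddCommGroup V] [InnerProductSpace ℝ V]
    [FiniteDimensional ℝ V] where
  /-- the (finite) set of roots -/
  Φ : Finset V
  /-- the rank -/
  r : ℕ
  /-- the simple roots `α₁, …, α_r` -/
  π : Fin r → V
  /-- the fundamental weights `ω₁, …, ω_r` -/
  ω : Fin r → V
  /-- the orthogonal reflection attached to a root -/
  s : V → (V ≃ₗ[ℝ] V)
  /-- the Weyl group -/
  W : Subgroup (V ≃ₗ[ℝ] V)
  /-- the weight lattice -/
  X : AddSubgroup V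
  root_ne_zero : ∀ α ∈ Φ, α ≠ (0 : V)
  root_span : Submodule.span ℝ (Φ : Set V) = ⊤
  reduced : ∀ α ∈ Φ, ∀ c : ℝ, c • α ∈ Φ → c = 1 ∨ c = -1
  crystallographic : ∀ α ∈ Φ, ∀ β ∈ Φ, ∃ n : ℤ, 2 * ⟪β, α⟫_ℝ / ⟪α, α⟫_ℝ = (n : ℝ)
  s_apply : ∀ α ∈ Φ, ∀ v : V, s α v = v - (2 * ⟪v, α⟫_ℝ / ⟪α, α⟫_ℝ) • α
  refl_stable : ∀ α ∈ Φ, ∀ β ∈ Φ, s α β ∈ Φ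
  W_eq : W = Subgroup.closure {g : V ≃ₗ[ℝ] V | ∃ α ∈ Φ, g = s α}
  inner_invariant : ∀ g ∈ W, ∀ u v : V, ⟪g u, g v⟫_ℝ = ⟪u, v⟫_ℝ
  simple_mem : ∀ i, π i ∈ Φ
  simple_indep : LinearIndependent ℝ π
  pos_or_neg : ∀ α ∈ Φ,
      (∃ c : Fin r → ℝ, (∀ i, 0 ≤ c i) ∧ α = ∑ i, c i • π i) ∨
      (∃ c : Fin r → ℝ, (∀ i, 0 ≤ c i) ∧ -α = ∑ i, c i • π i)
  fund : ∀ i j, 2 * ⟪ω i, π j⟫_ℝ / ⟪π j, π j⟫_ℝ = if i = j then (1 : ℝ) else 0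
  X_eq : X = AddSubgroup.closure (Set.range ω)
  X_stable : ∀ g ∈ W, ∀ x ∈ X, g x ∈ X

/-- The pairing `(v, α∨) = 2(v,α)/(α,α)` of a vector with the coroot of `α`. -/
def pairing {V : Type} [NormedAddCommGroup V] [InnerProductSpace ℝ V]
    (v α : V) : ℝ := 2 * ⟪v, α⟫_ℝ / ⟪α, α⟫_ℝ

namespace RootSystemData

variable {V : Type} [NormedAddCommGroup V] [InnerProductSpace ℝ V] [FiniteDimensional ℝ V]
variable (C : RootSystemData V)

/-- `α` is a nonnegative combination of the simple roots (a positive root, if `α ∈ Φ`). -/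
def IsPos (α : V) : Prop := ∃ c : Fin C.r → ℝ, (∀ i, 0 ≤ c i) ∧ α = ∑ i, c i • C.π i

/-- `α` is a nonpositive combination of the simple roots (a negative root, if `α ∈ Φ`). -/
def IsNeg (α : V) : Prop := C.IsPos (-α)

/-- A weight is dominant if it pairs nonnegatively with all simple coroots. -/
def IsDominant (lam : V) : Prop := ∀ i, 0 ≤ pairing lam (C.π i)

/-- The product of the simple reflections along a word. -/
def wordProd (l : List (Fin C.r)) : V ≃ₗ[ℝ] V := (l.map fun i => C.s (C.π i)).prod

/-- The length of `w`: the least length of an expression of `w` as a product of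
simple reflections. -/
def length (w : V ≃ₗ[ℝ] V) : ℕ :=
  sInf {n | ∃ l : List (Fin C.r), l.length = n ∧ C.wordProd l = w}

/-- The (strong) Bruhat order on the Weyl group: `u ≤ v` iff `v` is obtained from `u`
by successively multiplying by reflections, increasing the length at each step. -/
def BruhatLE (u v : V ≃ₗ[ℝ] V) : Prop :=
  Relation.ReflTransGen
    (fun a b => (∃ α ∈ C.Φ, b = a * C.s α) ∧ C.length a < C.length b) u v

/-- The Steinberg weight `e_v = v⁻¹ ⬝ ∑_{i : v⁻¹ α_i < 0} ω_i`. -/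
def steinberg (v : V ≃ₗ[ℝ] V) : V :=
  v⁻¹ (∑ i ∈ Finset.univ.filter (fun i => C.IsNeg (v⁻¹ (C.π i))), C.ω i)

/-- The excellent order on weights: `λ ≤ₑ μ` iff `(λ,λ) < (μ,μ)`, or `λ = wν`, `μ = zν`
for some dominant `ν ∈ X` and `w ≤ z` in the Bruhat order. -/
def ExcLE (lam mu : V) : Prop :=
  ⟪lam, lam⟫_ℝ < ⟪mu, mu⟫_ℝ ∨
    ∃ nu ∈ C.X, C.IsDominant nu ∧
      ∃ w ∈ C.W, ∃ z ∈ C.W, C.BruhatLE w z ∧ lam = w nu ∧ mu = z nu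

/-- The strict excellent order. -/
def ExcLT (lam mu : V) : Prop := C.ExcLE lam mu ∧ lam ≠ mu

/-- The antipodal excellent order: `λ ≤ₐ μ` iff `-λ ≤ₑ -μ`. -/
def AntiLE (lam mu : V) : Prop := C.ExcLE (-lam) (-mu)

/-- The strict antipodal excellent order. -/
def AntiLT (lam mu : V) : Prop := C.AntiLE lam mu ∧ lam ≠ mu

/-- The dominance order: `μ ≤_d ν` iff `ν - μ` is a nonnegative integer combination of
the positive roots. -/
def DomLE (mu nu : V) : Prop :=
  ∃ c : V → ℕ, nu - mu = ∑ α ∈ C.Φ.filter (fun a => C.IsPos a), (c α : ℝ) • α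

theorem omega_mem (i : Fin C.r) : C.ω i ∈ C.X := by
  rw [C.X_eq]; exact AddSubgroup.subset_closure ⟨i, rfl⟩

theorem steinberg_mem {v : V ≃ₗ[ℝ] V} (hv : v ∈ C.W) : C.steinberg v ∈ C.X :=
  C.X_stable _ (inv_mem hv) _ (AddSubgroup.sum_mem _ fun i _ => C.omega_mem i)

/-- The group ring `ℤ[X]` of the weight lattice. -/
abbrev GroupRing := AddMonoidAlgebra ℤ ↥C.X

/-- The basis element `e^λ` of `ℤ[X]`. -/
def expo (x : V) (hx : x ∈ C.X) : C.GroupRing := AddMonoidAlgebra.single ⟨x, hx⟩ 1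

/-- `e^λ`, defined for all `λ : V` (and zero off the lattice). -/
def expoOf (x : V) : C.GroupRing := if hx : x ∈ C.X then C.expo x hx else 0

/-- The coefficient of `e^x` in an element of `ℤ[X]`. -/
def coeff (m : C.GroupRing) (x : ↥C.X) : ℤ := (AddMonoidAlgebra.coeff m : ↥C.X →₀ ℤ) x

/-- The support of an element of `ℤ[X]`. -/
def supp (m : C.GroupRing) : Finset ↥C.X := (AddMonoidAlgebra.coeff m : ↥C.X →₀ ℤ).support

/-- The action of `g ∈ W` on the weight lattice. -/
def actX (g : V ≃ₗ[ℝ] V) (hg : g ∈ C.W) : ↥C.X → ↥C.X :=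
  fun x => ⟨g x, C.X_stable g hg x.1 x.2⟩

/-- The action of `g ∈ W` on `ℤ[X]`, with `e^λ ↦ e^{gλ}`. -/
def wAct (g : V ≃ₗ[ℝ] V) (hg : g ∈ C.W) (m : C.GroupRing) : C.GroupRing :=
  AddMonoidAlgebra.ofCoeff (Finsupp.mapDomain (C.actX g hg) (AddMonoidAlgebra.coeff m))

/-- `m` lies in the invariant subring `ℤ[X]^W`. -/
def IsWInvariant (m : C.GroupRing) : Prop := ∀ g (hg : g ∈ C.W), C.wAct g hg m = m

/-- The parabolic subgroup `W_{Π'}` generated by the simple reflections `s_α, α ∈ Π'`,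
for a subset `Π'` of the simple roots (given by a subset `J` of the index set). -/
def parabolicSubgroup (J : Set (Fin C.r)) : Subgroup (V ≃ₗ[ℝ] V) :=
  Subgroup.closure {g | ∃ i ∈ J, g = C.s (C.π i)}

theorem parabolic_le (J : Set (Fin C.r)) : C.parabolicSubgroup J ≤ C.W := by
  refine (Subgroup.closure_le _).2 ?_
  rintro g ⟨i, _, rfl⟩
  rw [C.W_eq]
  exact Subgroup.subset_closure ⟨C.π i, C.simple_mem i, rfl⟩

/-- `m` lies in the invariant subring `ℤ[X]^H` for a subgroup `H ≤ W`. -/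
def IsInvariantUnder (H : Subgroup (V ≃ₗ[ℝ] V)) (hH : H ≤ C.W) (m : C.GroupRing) : Prop :=
  ∀ g (hg : g ∈ H), C.wAct g (hH hg) m = m

/-- `v` is of minimal length in its coset `v ⬝ W_{Π'}`. -/
def IsMinCosetRep (J : Set (Fin C.r)) (v : V ≃ₗ[ℝ] V) : Prop :=
  v ∈ C.W ∧ ∀ z ∈ C.parabolicSubgroup J, C.length v ≤ C.length (v * z)

/-- The subgroup generated by the simple reflections fixing a given vector. -/
def fixSubgroup (x : V) : Subgroup (V ≃ₗ[ℝ] V) :=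
  Subgroup.closure {g | ∃ i : Fin C.r, C.s (C.π i) x = x ∧ g = C.s (C.π i)}

end RootSystemData

namespace RootSystemData

section Aux

variable {V : Type} [NormedAddCommGroup V] [InnerProductSpace ℝ V] [FiniteDimensional ℝ V]
variable (C : RootSystemData V)

/-! ### Basic facts -/

lemma inner_self_pos_of_mem {α : V} (hα : α ∈ C.Φ) : 0 < ⟪α, α⟫_ℝ :=
  lt_of_le_of_ne real_inner_self_nonneg
    (fun h => C.root_ne_zero α hα (inner_self_eq_zero.mp h.symm))

lemma pi_ne_zero (i : Fin C.r) : C.π i ≠ 0 := C.root_ne_zero _ (C.simple_mem i)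

lemma span_pi : ⊤ ≤ Submodule.span ℝ (Set.range C.π) := by
  rw [← C.root_span]
  refine Submodule.span_le.2 ?_
  intro α hα
  have hsum : ∀ c : Fin C.r → ℝ, (∑ i, c i • C.π i) ∈ Submodule.span ℝ (Set.range C.π) := by
    intro c
    exact Submodule.sum_mem _ fun i _ =>
      Submodule.smul_mem _ _ (Submodule.subset_span ⟨i, rfl⟩)
  rcases C.pos_or_neg α hα with ⟨c, _, hc⟩ | ⟨c, _, hc⟩
  · rw [hc]; exact hsum c
  · have := hsum c
    rw [← hc] at this
    simpa using Submodule.neg_mem _ this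

/-- The simple roots as a basis. -/
noncomputable def piBasis : Module.Basis (Fin C.r) ℝ V := Module.Basis.mk C.simple_indep C.span_pi

@[simp] lemma piBasis_apply (i : Fin C.r) : C.piBasis i = C.π i := by
  simp [piBasis]

/-- Coordinates with respect to the simple roots. -/
noncomputable def coord (α : V) (i : Fin C.r) : ℝ := C.piBasis.repr α i

lemma coord_sum (c : Fin C.r → ℝ) (j : Fin C.r) :
    C.coord (∑ i, c i • C.π i) j = c j := by
  have : (∑ i, c i • C.π i) = ∑ i, c i • C.piBasis i := by simp
  simp only [coord, this, map_sum, map_smul]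
  have h : ∀ x : Fin C.r, (C.piBasis.repr (C.π x)) j = if x = j then 1 else 0 := by
    intro x
    rw [← C.piBasis_apply x, C.piBasis.repr_self]
    simp [Finsupp.single_apply]
  simp [h]

lemma sum_coord_smul (α : V) : ∑ i, C.coord α i • C.π i = α := by
  have := C.piBasis.sum_repr α
  simpa [coord] using this

lemma isPos_iff_coord {α : V} : C.IsPos α ↔ ∀ i, 0 ≤ C.coord α i := by
  constructor
  · rintro ⟨c, hc, rfl⟩ i
    rw [C.coord_sum]; exact hc i
  · intro h
    exact ⟨C.coord α, h, (C.sum_coord_smul α).symm⟩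

lemma coord_neg (α : V) (i : Fin C.r) : C.coord (-α) i = -C.coord α i := by
  simp [coord]

lemma isNeg_iff_coord {α : V} : C.IsNeg α ↔ ∀ i, C.coord α i ≤ 0 := by
  unfold IsNeg
  rw [C.isPos_iff_coord]
  constructor
  · intro h i; have := h i; rw [C.coord_neg] at this; linarith
  · intro h i; rw [C.coord_neg]; linarith [h i]

lemma not_isPos_and_isNeg {α : V} (hα : α ≠ 0) : ¬(C.IsPos α ∧ C.IsNeg α) := by
  rintro ⟨hp, hn⟩
  rw [C.isPos_iff_coord] at hp
  rw [C.isNeg_iff_coord] at hn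
  apply hα
  have hc : ∀ i, C.coord α i = 0 := fun i => le_antisymm (hn i) (hp i)
  have := C.sum_coord_smul α
  rw [← this]
  simp [hc]

lemma isPos_or_isNeg {α : V} (hα : α ∈ C.Φ) : C.IsPos α ∨ C.IsNeg α := by
  rcases C.pos_or_neg α hα with ⟨c, h1, h2⟩ | ⟨c, h1, h2⟩
  · exact Or.inl ⟨c, h1, h2⟩
  · exact Or.inr ⟨c, h1, h2⟩

lemma isNeg_of_not_isPos {α : V} (hα : α ∈ C.Φ) (h : ¬ C.IsPos α) : C.IsNeg α :=
  (C.isPos_or_isNeg hα).resolve_left h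

lemma isPos_of_not_isNeg {α : V} (hα : α ∈ C.Φ) (h : ¬ C.IsNeg α) : C.IsPos α :=
  (C.isPos_or_isNeg hα).resolve_right h

lemma not_isNeg_of_isPos {α : V} (hα : α ≠ 0) (h : C.IsPos α) : ¬ C.IsNeg α :=
  fun hn => C.not_isPos_and_isNeg hα ⟨h, hn⟩

lemma isPos_neg_iff {α : V} : C.IsPos (-α) ↔ C.IsNeg α := Iff.rfl

lemma isNeg_neg_iff {α : V} : C.IsNeg (-α) ↔ C.IsPos α := by
  unfold IsNeg; rw [neg_neg]

lemma isPos_pi (i : Fin C.r) : C.IsPos (C.π i) := by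
  refine ⟨fun j => if j = i then 1 else 0, fun j => by positivity, ?_⟩
  simp [ite_smul, Finset.sum_ite_eq']

lemma isPos_sum {ι : Type*} (s : Finset ι) (c : ι → ℝ) (f : ι → V)
    (hc : ∀ i ∈ s, 0 ≤ c i) (hf : ∀ i ∈ s, c i ≠ 0 → C.IsPos (f i)) :
    C.IsPos (∑ i ∈ s, c i • f i) := by
  rw [C.isPos_iff_coord]
  intro j
  have : C.coord (∑ i ∈ s, c i • f i) j = ∑ i ∈ s, c i * C.coord (f i) j := by
    simp [coord, map_sum, map_smul, Finsupp.coe_smul]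
  rw [this]
  refine Finset.sum_nonneg fun i hi => ?_
  by_cases hci : c i = 0
  · rw [hci, zero_mul]
  · exact mul_nonneg (hc i hi) ((C.isPos_iff_coord.1 (hf i hi hci)) j)

/-! ### Reflections -/

lemma s_apply_self {α : V} (hα : α ∈ C.Φ) : C.s α α = -α := by
  rw [C.s_apply α hα α]
  have h : ⟪α, α⟫_ℝ ≠ 0 := (C.inner_self_pos_of_mem hα).ne'
  rw [mul_div_assoc, div_self h]
  module

lemma s_s_apply {α : V} (hα : α ∈ C.Φ) (v : V) : C.s α (C.s α v) = v := by
  have h : ⟪α, α⟫_ℝ ≠ 0 := (C.inner_self_pos_of_mem hα).ne'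
  rw [C.s_apply α hα v, C.s_apply α hα]
  rw [inner_sub_left, real_inner_smul_left]
  field_simp
  module

lemma s_mul_self {α : V} (hα : α ∈ C.Φ) : C.s α * C.s α = 1 :=
  LinearEquiv.toLinearMap_injective (LinearMap.ext fun v => C.s_s_apply hα v)

lemma s_inv {α : V} (hα : α ∈ C.Φ) : (C.s α)⁻¹ = C.s α := by
  rw [inv_eq_iff_mul_eq_one, C.s_mul_self hα]

lemma s_mem_W {α : V} (hα : α ∈ C.Φ) : C.s α ∈ C.W := by
  rw [C.W_eq]; exact Subgroup.subset_closure ⟨α, hα, rfl⟩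

lemma W_stable_root {g : V ≃ₗ[ℝ] V} (hg : g ∈ C.W) {α : V} (hα : α ∈ C.Φ) : g α ∈ C.Φ := by
  rw [C.W_eq] at hg
  induction hg using Subgroup.closure_induction generalizing α with
  | mem x hx => rcases hx with ⟨β, hβ, rfl⟩; exact C.refl_stable β hβ α hα
  | one => simpa using hα
  | mul x y hx hy ihx ihy =>
      have : (x * y) α = x (y α) := rfl
      rw [this]; exact ihx (ihy hα)
  | inv x hx ihx =>
      -- x ∈ closure; show x⁻¹ α ∈ Φ. Use that x is a bijection on Φ.
      classical
      have hmaps : ∀ β ∈ C.Φ, x β ∈ C.Φ := fun β hβ => ihx hβ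
      have hinj : Set.InjOn (fun β => x β) C.Φ := fun a _ b _ h => x.injective h
      have himg : C.Φ.image (fun β => x β) = C.Φ := by
        apply Finset.eq_of_subset_of_card_le
        · intro b hb
          rcases Finset.mem_image.1 hb with ⟨a, ha, rfl⟩
          exact hmaps a ha
        · rw [Finset.card_image_of_injOn hinj]
      have : α ∈ C.Φ.image (fun β => x β) := by rw [himg]; exact hα
      rcases Finset.mem_image.1 this with ⟨β, hβ, hxb⟩
      have hx' : x⁻¹ α = β := by
        apply x.injective
        have : x (x⁻¹ α) = α := by
          have : (x * x⁻¹) α = α := by rw [mul_inv_cancel]; rfl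
          exact this
        rw [this, hxb]
      rwa [hx']

lemma inner_inv_left {g : V ≃ₗ[ℝ] V} (hg : g ∈ C.W) (u v : V) :
    ⟪g⁻¹ u, v⟫_ℝ = ⟪u, g v⟫_ℝ := by
  have := C.inner_invariant g hg (g⁻¹ u) v
  have hgg : g (g⁻¹ u) = u := by
    have : (g * g⁻¹) u = u := by rw [mul_inv_cancel]; rfl
    exact this
  rwa [hgg, eq_comm] at this

lemma conj_s {g : V ≃ₗ[ℝ] V} (hg : g ∈ C.W) {α : V} (hα : α ∈ C.Φ) :
    g * C.s α * g⁻¹ = C.s (g α) := by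
  have hgα : g α ∈ C.Φ := C.W_stable_root hg hα
  apply LinearEquiv.toLinearMap_injective
  apply LinearMap.ext
  intro v
  have lhs : (g * C.s α * g⁻¹) v = g (C.s α (g⁻¹ v)) := rfl
  have h1 : ⟪g⁻¹ v, α⟫_ℝ = ⟪v, g α⟫_ℝ := C.inner_inv_left hg v α
  have h2 : ⟪g α, g α⟫_ℝ = ⟪α, α⟫_ℝ := C.inner_invariant g hg α α
  show (g * C.s α * g⁻¹) v = C.s (g α) v
  rw [lhs, C.s_apply α hα, C.s_apply (g α) hgα, map_sub, map_smul, h1, h2]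
  have : g (g⁻¹ v) = v := by
    have : (g * g⁻¹) v = v := by rw [mul_inv_cancel]; rfl
    exact this
  rw [this]

/-! ### Key geometric lemma: `s_i` permutes the positive roots other than `π i` -/

lemma eq_pi_of_single_coord {α : V} (hα : α ∈ C.Φ) (hpos : C.IsPos α) (i : Fin C.r)
    (h : ∀ j, j ≠ i → C.coord α j = 0) : α = C.π i := by
  have hexp : α = C.coord α i • C.π i := by
    conv_lhs => rw [← C.sum_coord_smul α]
    rw [Finset.sum_eq_single i]
    · intro j _ hj; rw [h j hj, zero_smul]
    · intro hi; exact absurd (Finset.mem_univ i) hi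
  have hmem : C.coord α i • C.π i ∈ C.Φ := by rw [← hexp]; exact hα
  rcases C.reduced (C.π i) (C.simple_mem i) _ hmem with h1 | h1
  · rw [hexp, h1, one_smul]
  · exfalso
    have h0 : 0 ≤ C.coord α i := C.isPos_iff_coord.1 hpos i
    rw [h1] at h0; norm_num at h0

lemma s_simple_pos {i : Fin C.r} {β : V} (hβ : β ∈ C.Φ) (hpos : C.IsPos β)
    (hne : β ≠ C.π i) : C.IsPos (C.s (C.π i) β) ∧ C.s (C.π i) β ≠ C.π i := by
  have hmem : C.s (C.π i) β ∈ C.Φ := C.refl_stable _ (C.simple_mem i) _ hβ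
  have hsβ : C.s (C.π i) β = β - (2 * ⟪β, C.π i⟫_ℝ / ⟪C.π i, C.π i⟫_ℝ) • C.π i :=
    C.s_apply _ (C.simple_mem i) β
  -- there is j ≠ i with coord β j > 0
  have hj : ∃ j, j ≠ i ∧ 0 < C.coord β j := by
    by_contra h
    push_neg at h
    have : ∀ j, j ≠ i → C.coord β j = 0 := by
      intro j hji
      exact le_antisymm (h j hji) (C.isPos_iff_coord.1 hpos j)
    exact hne (C.eq_pi_of_single_coord hβ hpos i this)
  obtain ⟨j, hji, hjpos⟩ := hj
  have hcoordj : C.coord (C.s (C.π i) β) j = C.coord β j := by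
    rw [hsβ]
    have : C.coord (β - (2 * ⟪β, C.π i⟫_ℝ / ⟪C.π i, C.π i⟫_ℝ) • C.π i) j
        = C.coord β j - (2 * ⟪β, C.π i⟫_ℝ / ⟪C.π i, C.π i⟫_ℝ) * C.coord (C.π i) j := by
      simp [coord, map_sub, map_smul]
    rw [this]
    have hpij : C.coord (C.π i) j = 0 := by
      have : C.π i = ∑ k, (if k = i then (1:ℝ) else 0) • C.π k := by
        simp [ite_smul, Finset.sum_ite_eq']
      rw [this, C.coord_sum]
      simp only [ite_eq_right_iff]
      intro h'; exact absurd h' hji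
    rw [hpij, mul_zero, sub_zero]
  constructor
  · apply C.isPos_of_not_isNeg hmem
    intro hneg
    have := C.isNeg_iff_coord.1 hneg j
    rw [hcoordj] at this
    linarith
  · intro h
    rw [h] at hcoordj
    have hpij : C.coord (C.π i) j = 0 := by
      have : C.π i = ∑ k, (if k = i then (1:ℝ) else 0) • C.π k := by
        simp [ite_smul, Finset.sum_ite_eq']
      rw [this, C.coord_sum]
      simp only [ite_eq_right_iff]
      intro h'; exact absurd h' hji
    rw [hpij] at hcoordj
    linarith

/-! ### W is generated by the simple reflections -/

/-- The subgroup generated by the simple reflections. -/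
def Ws : Subgroup (V ≃ₗ[ℝ] V) := Subgroup.closure {g | ∃ i : Fin C.r, g = C.s (C.π i)}

lemma Ws_le_W : C.Ws ≤ C.W := by
  refine (Subgroup.closure_le _).2 ?_
  rintro g ⟨i, rfl⟩
  exact C.s_mem_W (C.simple_mem i)

lemma s_simple_mem_Ws (i : Fin C.r) : C.s (C.π i) ∈ C.Ws :=
  Subgroup.subset_closure ⟨i, rfl⟩

/-- The height of a vector: the sum of its coordinates. -/
noncomputable def ht (α : V) : ℝ := ∑ i, C.coord α i

lemma coord_pi (i j : Fin C.r) : C.coord (C.π i) j = if j = i then 1 else 0 := by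
  have : C.π i = ∑ k, (if k = i then (1:ℝ) else 0) • C.π k := by
    simp [ite_smul, Finset.sum_ite_eq']
  rw [this, C.coord_sum]

lemma ht_pi (i : Fin C.r) : C.ht (C.π i) = 1 := by
  simp [ht, coord_pi]

lemma coord_sub_smul (α : V) (t : ℝ) (i j : Fin C.r) :
    C.coord (α - t • C.π i) j = C.coord α j - t * C.coord (C.π i) j := by
  simp [coord, map_sub, map_smul]

lemma ht_sub_smul (α : V) (t : ℝ) (i : Fin C.r) :
    C.ht (α - t • C.π i) = C.ht α - t := by
  unfold ht
  have h1 : ∀ j, C.coord (α - t • C.π i) j = C.coord α j - t * C.coord (C.π i) j :=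
    fun j => C.coord_sub_smul α t i j
  simp only [h1]
  rw [Finset.sum_sub_distrib, ← Finset.mul_sum]
  have h2 : ∑ j, C.coord (C.π i) j = 1 := C.ht_pi i
  rw [h2, mul_one]

lemma exists_inner_pos {α : V} (hα : α ∈ C.Φ) (hpos : C.IsPos α) :
    ∃ i, 0 < ⟪α, C.π i⟫_ℝ := by
  by_contra h
  push_neg at h
  have hself : ⟪α, α⟫_ℝ ≤ 0 := by
    have : ⟪α, α⟫_ℝ = ∑ i, C.coord α i * ⟪α, C.π i⟫_ℝ := by
      nth_rewrite 1 [← C.sum_coord_smul α]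
      rw [sum_inner]
      refine Finset.sum_congr rfl fun i _ => ?_
      rw [real_inner_smul_left, real_inner_comm]
    rw [this]
    refine Finset.sum_nonpos fun i _ => ?_
    exact mul_nonpos_of_nonneg_of_nonpos (C.isPos_iff_coord.1 hpos i) (h i)
  exact absurd (C.inner_self_pos_of_mem hα) (not_lt.2 hself)

lemma pos_root_conj_aux : ∀ n : ℕ, ∀ α, α ∈ C.Φ → C.IsPos α →
    (C.Φ.filter (fun β => C.IsPos β ∧ C.ht β < C.ht α)).card = n →
    ∃ g ∈ C.Ws, ∃ i, α = g (C.π i) := by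
  intro n
  induction n using Nat.strong_induction_on with
  | _ n IH =>
    intro α hα hpos hcard
    by_cases hsimple : ∃ i, α = C.π i
    · obtain ⟨i, rfl⟩ := hsimple
      exact ⟨1, one_mem _, i, rfl⟩
    push_neg at hsimple
    obtain ⟨i, hi⟩ := C.exists_inner_pos hα hpos
    have hne : α ≠ C.π i := hsimple i
    obtain ⟨hspos, _⟩ := C.s_simple_pos hα hpos hne
    have hmem : C.s (C.π i) α ∈ C.Φ := C.refl_stable _ (C.simple_mem i) _ hα
    have hht : C.ht (C.s (C.π i) α) < C.ht α := by
      rw [C.s_apply _ (C.simple_mem i) α, C.ht_sub_smul]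
      have ht0 : 0 < 2 * ⟪α, C.π i⟫_ℝ / ⟪C.π i, C.π i⟫_ℝ :=
        div_pos (by linarith) (C.inner_self_pos_of_mem (C.simple_mem i))
      linarith
    have hsub : (C.Φ.filter (fun β => C.IsPos β ∧ C.ht β < C.ht (C.s (C.π i) α)))
        ⊂ (C.Φ.filter (fun β => C.IsPos β ∧ C.ht β < C.ht α)) := by
      constructor
      · intro β hβ
        rw [Finset.mem_filter] at hβ ⊢
        exact ⟨hβ.1, hβ.2.1, lt_trans hβ.2.2 hht⟩
      · intro hcon
        have : C.s (C.π i) α ∈ C.Φ.filter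
            (fun β => C.IsPos β ∧ C.ht β < C.ht (C.s (C.π i) α)) := by
          apply hcon
          rw [Finset.mem_filter]
          exact ⟨hmem, hspos, hht⟩
        rw [Finset.mem_filter] at this
        exact absurd this.2.2 (lt_irrefl _)
    have hcard' := Finset.card_lt_card hsub
    rw [hcard] at hcard'
    obtain ⟨g, hg, j, hgj⟩ := IH _ hcard' (C.s (C.π i) α) hmem hspos rfl
    refine ⟨C.s (C.π i) * g, mul_mem (C.s_simple_mem_Ws i) hg, j, ?_⟩
    have : (C.s (C.π i) * g) (C.π j) = C.s (C.π i) (g (C.π j)) := rfl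
    rw [this, ← hgj, C.s_s_apply (C.simple_mem i)]

lemma neg_mem_Phi {α : V} (hα : α ∈ C.Φ) : -α ∈ C.Φ := by
  have := C.refl_stable α hα α hα
  rwa [C.s_apply_self hα] at this

lemma s_neg_eq {α : V} (hα : α ∈ C.Φ) : C.s (-α) = C.s α := by
  have hnα : -α ∈ C.Φ := C.neg_mem_Phi hα
  apply LinearEquiv.toLinearMap_injective
  apply LinearMap.ext
  intro v
  show C.s (-α) v = C.s α v
  rw [C.s_apply _ hnα v, C.s_apply _ hα v]
  rw [inner_neg_right, inner_neg_left, inner_neg_right, neg_neg, smul_neg]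
  have : 2 * -⟪v, α⟫_ℝ / ⟪α, α⟫_ℝ = -(2 * ⟪v, α⟫_ℝ / ⟪α, α⟫_ℝ) := by ring
  rw [this, neg_smul, neg_neg]

lemma s_mem_Ws {α : V} (hα : α ∈ C.Φ) : C.s α ∈ C.Ws := by
  have key : ∀ β, β ∈ C.Φ → C.IsPos β → C.s β ∈ C.Ws := by
    intro β hβ hpos
    obtain ⟨g, hg, i, rfl⟩ := C.pos_root_conj_aux _ _ hβ hpos rfl
    have := C.conj_s (C.Ws_le_W hg) (C.simple_mem i)
    rw [← this]
    exact mul_mem (mul_mem hg (C.s_simple_mem_Ws i)) (inv_mem hg)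
  rcases C.isPos_or_isNeg hα with h | h
  · exact key α hα h
  · have h2 : C.s (-(-α)) ∈ C.Ws := by
      rw [C.s_neg_eq (C.neg_mem_Phi hα)]
      exact key (-α) (C.neg_mem_Phi hα) h
    rwa [neg_neg] at h2

lemma W_eq_Ws : C.W = C.Ws := by
  apply le_antisymm
  · rw [C.W_eq]
    refine (Subgroup.closure_le _).2 ?_
    rintro g ⟨α, hα, rfl⟩
    exact C.s_mem_Ws hα
  · exact C.Ws_le_W

/-! ### Words and length -/

lemma wordProd_nil : C.wordProd [] = 1 := rfl

lemma wordProd_cons (i : Fin C.r) (l : List (Fin C.r)) :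
    C.wordProd (i :: l) = C.s (C.π i) * C.wordProd l := by
  simp [wordProd]

lemma wordProd_append (l l' : List (Fin C.r)) :
    C.wordProd (l ++ l') = C.wordProd l * C.wordProd l' := by
  simp [wordProd]

lemma wordProd_singleton (i : Fin C.r) : C.wordProd [i] = C.s (C.π i) := by
  simp [wordProd]

lemma wordProd_mem (l : List (Fin C.r)) : C.wordProd l ∈ C.W := by
  induction l with
  | nil => rw [C.wordProd_nil]; exact one_mem _
  | cons i t ih =>
      rw [C.wordProd_cons]
      exact mul_mem (C.s_mem_W (C.simple_mem i)) ih

lemma wordProd_reverse (l : List (Fin C.r)) :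
    C.wordProd l.reverse = (C.wordProd l)⁻¹ := by
  induction l with
  | nil => simp [wordProd_nil]
  | cons i t ih =>
      rw [List.reverse_cons, C.wordProd_append, ih, C.wordProd_singleton,
        C.wordProd_cons, mul_inv_rev, C.s_inv (C.simple_mem i)]

lemma exists_word {g : V ≃ₗ[ℝ] V} (hg : g ∈ C.W) : ∃ l, C.wordProd l = g := by
  rw [C.W_eq_Ws] at hg
  induction hg using Subgroup.closure_induction with
  | mem x hx => rcases hx with ⟨i, rfl⟩; exact ⟨[i], C.wordProd_singleton i⟩
  | one => exact ⟨[], rfl⟩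
  | mul x y _ _ ihx ihy =>
      obtain ⟨l, rfl⟩ := ihx; obtain ⟨l', rfl⟩ := ihy
      exact ⟨l ++ l', C.wordProd_append l l'⟩
  | inv x _ ihx =>
      obtain ⟨l, rfl⟩ := ihx
      exact ⟨l.reverse, C.wordProd_reverse l⟩

lemma length_le_of_word {g : V ≃ₗ[ℝ] V} {l : List (Fin C.r)} (h : C.wordProd l = g) :
    C.length g ≤ l.length :=
  Nat.sInf_le ⟨l, rfl, h⟩

lemma exists_reduced_word {g : V ≃ₗ[ℝ] V} (hg : g ∈ C.W) :
    ∃ l : List (Fin C.r), C.wordProd l = g ∧ l.length = C.length g := by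
  obtain ⟨l, hl⟩ := C.exists_word hg
  have hne : {n | ∃ l : List (Fin C.r), l.length = n ∧ C.wordProd l = g}.Nonempty :=
    ⟨l.length, l, rfl, hl⟩
  obtain ⟨l', hl', hl''⟩ := Nat.sInf_mem hne
  exact ⟨l', hl'', hl'⟩

lemma length_one : C.length 1 = 0 :=
  Nat.le_antisymm (C.length_le_of_word (l := []) rfl) (Nat.zero_le _)

lemma eq_one_of_length_zero {g : V ≃ₗ[ℝ] V} (hg : g ∈ C.W) (h : C.length g = 0) :
    g = 1 := by
  obtain ⟨l, hl, hlen⟩ := C.exists_reduced_word hg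
  rw [h] at hlen
  rw [List.length_eq_zero_iff] at hlen
  rw [hlen] at hl
  exact hl.symm

lemma length_mul_le (g h : V ≃ₗ[ℝ] V) (hg : g ∈ C.W) (hh : h ∈ C.W) :
    C.length (g * h) ≤ C.length g + C.length h := by
  obtain ⟨l, hl, hlen⟩ := C.exists_reduced_word hg
  obtain ⟨l', hl', hlen'⟩ := C.exists_reduced_word hh
  have : C.wordProd (l ++ l') = g * h := by rw [C.wordProd_append, hl, hl']
  calc C.length (g * h) ≤ (l ++ l').length := C.length_le_of_word this
    _ = C.length g + C.length h := by rw [List.length_append, hlen, hlen']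

lemma length_inv {g : V ≃ₗ[ℝ] V} (hg : g ∈ C.W) : C.length g⁻¹ = C.length g := by
  have key : ∀ u : V ≃ₗ[ℝ] V, u ∈ C.W → C.length u⁻¹ ≤ C.length u := by
    intro u hu
    obtain ⟨l, hl, hlen⟩ := C.exists_reduced_word hu
    have : C.wordProd l.reverse = u⁻¹ := by rw [C.wordProd_reverse, hl]
    calc C.length u⁻¹ ≤ l.reverse.length := C.length_le_of_word this
      _ = C.length u := by rw [List.length_reverse, hlen]
  refine le_antisymm (key g hg) ?_
  have := key g⁻¹ (inv_mem hg)
  rwa [inv_inv] at this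

/-! ### Exchange lemma and the length dichotomy -/

lemma map_ne_zero' (C : RootSystemData V) (g : V ≃ₗ[ℝ] V) {x : V} (hx : x ≠ 0) :
    g x ≠ 0 :=
  fun h => hx (by simpa using g.injective (h.trans (map_zero g).symm))

lemma exchange : ∀ (l : List (Fin C.r)) (i : Fin C.r),
    C.IsNeg (C.wordProd l (C.π i)) →
    ∃ l' : List (Fin C.r), l'.length + 1 = l.length ∧
      C.wordProd l' = C.wordProd l * C.s (C.π i) := by
  intro l
  induction l with
  | nil =>
      intro i h
      exfalso
      replace h : C.IsNeg (C.π i) := by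
        have : C.wordProd [] (C.π i) = C.π i := rfl
        rwa [this] at h
      exact C.not_isPos_and_isNeg (C.pi_ne_zero i) ⟨C.isPos_pi i, h⟩
  | cons j t ih =>
      intro i h
      replace h : C.IsNeg (C.s (C.π j) (C.wordProd t (C.π i))) := by
        have : C.wordProd (j :: t) (C.π i) = C.s (C.π j) (C.wordProd t (C.π i)) := by
          rw [C.wordProd_cons]; rfl
        rwa [this] at h
      have hmem : C.wordProd t (C.π i) ∈ C.Φ :=
        C.W_stable_root (C.wordProd_mem t) (C.simple_mem i)
      by_cases hcase : C.IsNeg (C.wordProd t (C.π i))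
      · obtain ⟨t', hlen, hprod⟩ := ih i hcase
        refine ⟨j :: t', by simp [← hlen], ?_⟩
        rw [C.wordProd_cons, hprod, C.wordProd_cons, mul_assoc]
      · have hpos : C.IsPos (C.wordProd t (C.π i)) := C.isPos_of_not_isNeg hmem hcase
        have heq : C.wordProd t (C.π i) = C.π j := by
          by_contra hne
          have hp := (C.s_simple_pos hmem hpos hne).1
          have hnz : C.s (C.π j) (C.wordProd t (C.π i)) ≠ 0 :=
            C.map_ne_zero' _ (C.map_ne_zero' _ (C.pi_ne_zero i))
          exact C.not_isPos_and_isNeg hnz ⟨hp, h⟩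
        have hconj := C.conj_s (C.wordProd_mem t) (C.simple_mem i)
        rw [heq] at hconj
        refine ⟨t, by simp, ?_⟩
        have hss := C.s_mul_self (C.simple_mem i)
        rw [C.wordProd_cons, ← hconj,
          mul_assoc (C.wordProd t * C.s (C.π i)) (C.wordProd t)⁻¹ (C.wordProd t),
          inv_mul_cancel, mul_one, mul_assoc, hss, mul_one]

lemma length_lt_of_isNeg {g : V ≃ₗ[ℝ] V} (hg : g ∈ C.W) {i : Fin C.r}
    (h : C.IsNeg (g (C.π i))) : C.length (g * C.s (C.π i)) < C.length g := by
  obtain ⟨l, hl, hlen⟩ := C.exists_reduced_word hg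
  have h' : C.IsNeg (C.wordProd l (C.π i)) := by rwa [hl]
  obtain ⟨l', hlen', hprod⟩ := C.exchange l i h'
  rw [hl] at hprod
  have := C.length_le_of_word hprod
  omega

lemma length_lt_of_isPos {g : V ≃ₗ[ℝ] V} (hg : g ∈ C.W) {i : Fin C.r}
    (h : C.IsPos (g (C.π i))) : C.length g < C.length (g * C.s (C.π i)) := by
  have hgs : g * C.s (C.π i) ∈ C.W := mul_mem hg (C.s_mem_W (C.simple_mem i))
  have hneg : C.IsNeg ((g * C.s (C.π i)) (C.π i)) := by
    have h1 : (g * C.s (C.π i)) (C.π i) = g (C.s (C.π i) (C.π i)) := rfl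
    rw [h1, C.s_apply_self (C.simple_mem i), map_neg]
    exact C.isNeg_neg_iff.2 h
  have := C.length_lt_of_isNeg hgs hneg
  rwa [mul_assoc, C.s_mul_self (C.simple_mem i), mul_one] at this

lemma isNeg_iff_length_lt {g : V ≃ₗ[ℝ] V} (hg : g ∈ C.W) (i : Fin C.r) :
    C.IsNeg (g (C.π i)) ↔ C.length (g * C.s (C.π i)) < C.length g := by
  constructor
  · exact C.length_lt_of_isNeg hg
  · intro h
    by_contra hneg
    have hmem : g (C.π i) ∈ C.Φ := C.W_stable_root hg (C.simple_mem i)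
    have hpos := C.isPos_of_not_isNeg hmem hneg
    exact absurd (C.length_lt_of_isPos hg hpos) (by omega)

/-! ### Inversion sets: `length = #inversions` -/

/-- The set of positive roots sent to negative roots by `g`. -/
def Nset (g : V ≃ₗ[ℝ] V) : Finset V :=
  C.Φ.filter (fun α => C.IsPos α ∧ C.IsNeg (g α))

lemma Nset_card_s {g : V ≃ₗ[ℝ] V} (hg : g ∈ C.W) {i : Fin C.r}
    (h : C.IsNeg (g (C.π i))) :
    (C.Nset (g * C.s (C.π i))).card + 1 = (C.Nset g).card := by
  classical
  have hsi := C.simple_mem i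
  have hpi_mem : C.π i ∈ C.Nset g :=
    Finset.mem_filter.2 ⟨hsi, C.isPos_pi i, h⟩
  have key : (C.Nset (g * C.s (C.π i))).card = ((C.Nset g).erase (C.π i)).card := by
    refine Finset.card_bij' (fun β _ => C.s (C.π i) β) (fun γ _ => C.s (C.π i) γ)
      ?_ ?_ ?_ ?_
    · intro β hβ
      simp only [Nset, Finset.mem_filter] at hβ ⊢
      obtain ⟨hβΦ, hβpos, hβneg⟩ := hβ
      have hβne : β ≠ C.π i := by
        rintro rfl
        have h1 : (g * C.s (C.π i)) (C.π i) = g (C.s (C.π i) (C.π i)) := rfl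
        rw [h1, C.s_apply_self hsi, map_neg] at hβneg
        have := C.isNeg_neg_iff.1 hβneg
        exact C.not_isPos_and_isNeg (C.map_ne_zero' g (C.pi_ne_zero i)) ⟨this, h⟩
      obtain ⟨hspos, hsne⟩ := C.s_simple_pos hβΦ hβpos hβne
      refine Finset.mem_erase.2 ⟨hsne, ?_⟩
      simp only [Nset, Finset.mem_filter]
      refine ⟨C.refl_stable _ hsi _ hβΦ, hspos, ?_⟩
      have h2 : (g * C.s (C.π i)) β = g (C.s (C.π i) β) := rfl
      rwa [h2] at hβneg
    · intro γ hγ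
      simp only [Finset.mem_erase, Nset, Finset.mem_filter] at hγ
      obtain ⟨hγne, hγΦ, hγpos, hγneg⟩ := hγ
      simp only [Nset, Finset.mem_filter]
      refine ⟨C.refl_stable _ hsi _ hγΦ,
        (C.s_simple_pos hγΦ hγpos hγne).1, ?_⟩
      show C.IsNeg (g (C.s (C.π i) (C.s (C.π i) γ)))
      rwa [C.s_s_apply hsi]
    · intro β _; exact C.s_s_apply hsi β
    · intro γ _; exact C.s_s_apply hsi γ
  rw [key, Finset.card_erase_of_mem hpi_mem]
  have : 0 < (C.Nset g).card := Finset.card_pos.2 ⟨_, hpi_mem⟩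
  omega

lemma exists_descent {g : V ≃ₗ[ℝ] V} (hg : g ∈ C.W) (hne : C.length g ≠ 0) :
    ∃ i : Fin C.r, C.IsNeg (g (C.π i)) ∧
      C.length (g * C.s (C.π i)) = C.length g - 1 := by
  obtain ⟨l, hl, hlen⟩ := C.exists_reduced_word hg
  have hlne : l ≠ [] := by
    intro h; rw [h] at hlen; simp at hlen; omega
  rcases List.eq_nil_or_concat l with h | ⟨t, i, rfl⟩
  · exact absurd h hlne
  have hsi := C.simple_mem i
  have hgs : g * C.s (C.π i) = C.wordProd t := by
    rw [← hl, List.concat_eq_append, C.wordProd_append, C.wordProd_singleton,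
      mul_assoc, C.s_mul_self hsi, mul_one]
  have hlen1 : C.length (g * C.s (C.π i)) ≤ C.length g - 1 := by
    have := C.length_le_of_word hgs.symm
    rw [List.concat_eq_append, List.length_append] at hlen
    simp at hlen
    omega
  have hlow : C.length g ≤ C.length (g * C.s (C.π i)) + 1 := by
    obtain ⟨l', hl', hlen'⟩ := C.exists_reduced_word
      (mul_mem hg (C.s_mem_W hsi))
    have hback : C.wordProd (l' ++ [i]) = g := by
      rw [C.wordProd_append, C.wordProd_singleton, hl', mul_assoc,
        C.s_mul_self hsi, mul_one]
    have := C.length_le_of_word hback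
    rw [List.length_append] at this
    simp at this
    omega
  have hlt : C.length (g * C.s (C.π i)) < C.length g := by omega
  exact ⟨i, (C.isNeg_iff_length_lt hg i).2 hlt, by omega⟩

lemma length_eq_card_aux : ∀ (n : ℕ) (g : V ≃ₗ[ℝ] V), g ∈ C.W → C.length g = n →
    (C.Nset g).card = n := by
  intro n
  induction n using Nat.strong_induction_on with
  | _ n IH =>
    intro g hg hn
    rcases Nat.eq_zero_or_pos n with h0 | hpos
    · subst h0
      rw [C.eq_one_of_length_zero hg hn]
      rw [Finset.card_eq_zero, Finset.eq_empty_iff_forall_notMem]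
      intro α hα
      simp only [Nset, Finset.mem_filter] at hα
      obtain ⟨hαΦ, hαpos, hαneg⟩ := hα
      have h1 : (1 : V ≃ₗ[ℝ] V) α = α := rfl
      rw [h1] at hαneg
      exact C.not_isPos_and_isNeg (C.root_ne_zero α hαΦ) ⟨hαpos, hαneg⟩
    · obtain ⟨i, hneg, hexact⟩ := C.exists_descent hg (by omega)
      have hsW : C.s (C.π i) ∈ C.W := C.s_mem_W (C.simple_mem i)
      have hcard := IH (n - 1) (by omega) _ (mul_mem hg hsW) (by omega)
      have := C.Nset_card_s hg hneg
      omega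

lemma length_eq_card {g : V ≃ₗ[ℝ] V} (hg : g ∈ C.W) :
    C.length g = (C.Nset g).card :=
  (C.length_eq_card_aux (C.length g) g hg rfl).symm

/-! ### Dominant weights -/

lemma inner_pi_nonneg_of_dominant {ν : V} (hν : C.IsDominant ν) (i : Fin C.r) :
    0 ≤ ⟪ν, C.π i⟫_ℝ := by
  have := hν i
  unfold pairing at this
  have hpos := C.inner_self_pos_of_mem (C.simple_mem i)
  by_contra hcon
  push_neg at hcon
  have : 2 * ⟪ν, C.π i⟫_ℝ / ⟪C.π i, C.π i⟫_ℝ < 0 :=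
    div_neg_of_neg_of_pos (by linarith) hpos
  linarith

lemma inner_nonneg_of_dominant {ν β : V} (hν : C.IsDominant ν) (hβ : C.IsPos β) :
    0 ≤ ⟪ν, β⟫_ℝ := by
  obtain ⟨c, hc, rfl⟩ := hβ
  rw [inner_sum]
  refine Finset.sum_nonneg fun i _ => ?_
  rw [real_inner_smul_right]
  exact mul_nonneg (hc i) (C.inner_pi_nonneg_of_dominant hν i)

lemma inner_nonpos_of_dominant_neg {ν β : V} (hν : C.IsDominant ν) (hβ : C.IsNeg β) :
    ⟪ν, β⟫_ℝ ≤ 0 := by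
  have := C.inner_nonneg_of_dominant hν (C.isPos_neg_iff.2 hβ)
  rw [inner_neg_right] at this
  linarith

lemma s_fix {μ : V} {i : Fin C.r} (h : ⟪μ, C.π i⟫_ℝ = 0) : C.s (C.π i) μ = μ := by
  rw [C.s_apply _ (C.simple_mem i), h]
  simp

lemma pairing_zero_iff {μ : V} (i : Fin C.r) :
    pairing μ (C.π i) = 0 ↔ ⟪μ, C.π i⟫_ℝ = 0 := by
  unfold pairing
  have hpos := C.inner_self_pos_of_mem (C.simple_mem i)
  constructor
  · intro h
    have := (div_eq_zero_iff.1 h).resolve_right hpos.ne'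
    linarith
  · intro h; rw [h]; simp

lemma dominant_unique_aux : ∀ (n : ℕ) (g : V ≃ₗ[ℝ] V), g ∈ C.W → C.length g = n →
    ∀ μ ν : V, C.IsDominant μ → C.IsDominant ν → g μ = ν → μ = ν := by
  intro n
  induction n using Nat.strong_induction_on with
  | _ n IH =>
    intro g hg hn μ ν hμ hν hgμ
    rcases Nat.eq_zero_or_pos n with h0 | hpos
    · subst h0
      rw [C.eq_one_of_length_zero hg hn] at hgμ
      exact hgμ
    · obtain ⟨i, hneg, hexact⟩ := C.exists_descent hg (by omega)
      have h1 : 0 ≤ ⟪μ, C.π i⟫_ℝ := C.inner_pi_nonneg_of_dominant hμ i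
      have h2 : ⟪ν, g (C.π i)⟫_ℝ ≤ 0 := C.inner_nonpos_of_dominant_neg hν hneg
      have h3 : ⟪ν, g (C.π i)⟫_ℝ = ⟪μ, C.π i⟫_ℝ := by
        rw [← hgμ]; exact C.inner_invariant g hg μ (C.π i)
      have h4 : ⟪μ, C.π i⟫_ℝ = 0 := le_antisymm (h3 ▸ h2) h1
      have h5 : (g * C.s (C.π i)) μ = ν := by
        have : (g * C.s (C.π i)) μ = g (C.s (C.π i) μ) := rfl
        rw [this, C.s_fix h4, hgμ]
      exact IH (n - 1) (by omega) _ (mul_mem hg (C.s_mem_W (C.simple_mem i)))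
        (by omega) μ ν hμ hν h5

lemma dominant_unique {g : V ≃ₗ[ℝ] V} (hg : g ∈ C.W) {μ ν : V}
    (hμ : C.IsDominant μ) (hν : C.IsDominant ν) (h : g μ = ν) : μ = ν :=
  C.dominant_unique_aux (C.length g) g hg rfl μ ν hμ hν h

/-! ### The Q property and length additivity -/

/-- `u` sends every simple root orthogonal to `μ` to a positive root. -/
def Qp (u : V ≃ₗ[ℝ] V) (μ : V) : Prop :=
  ∀ j, pairing μ (C.π j) = 0 → C.IsPos (u (C.π j))

lemma isPos_map_of_orth {u : V ≃ₗ[ℝ] V} {μ β : V} (hQ : C.Qp u μ)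
    (hμ : C.IsDominant μ) (hβ : C.IsPos β) (h0 : ⟪μ, β⟫_ℝ = 0) :
    C.IsPos (u β) := by
  obtain ⟨c, hc, rfl⟩ := hβ
  have hterm : ∀ i ∈ Finset.univ, c i * ⟪μ, C.π i⟫_ℝ = 0 := by
    rw [← Finset.sum_eq_zero_iff_of_nonneg]
    · rw [inner_sum] at h0
      rw [← h0]
      refine Finset.sum_congr rfl fun i _ => ?_
      rw [real_inner_smul_right]
    · intro i _
      exact mul_nonneg (hc i) (C.inner_pi_nonneg_of_dominant hμ i)
  have hmap : u (∑ i, c i • C.π i) = ∑ i, c i • u (C.π i) := by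
    rw [map_sum]
    exact Finset.sum_congr rfl fun i _ => map_smul u _ _
  rw [hmap]
  refine C.isPos_sum _ _ _ (fun i _ => hc i) fun i _ hci => ?_
  apply hQ
  rw [C.pairing_zero_iff]
  have := hterm i (Finset.mem_univ i)
  rcases mul_eq_zero.1 this with h | h
  · exact absurd h hci
  · exact h

lemma inner_zero_of_mem_Nset {g : V ≃ₗ[ℝ] V} {μ : V} (hg : g ∈ C.W)
    (hμ : C.IsDominant μ) (hfix : g μ = μ) {β : V} (hβ : β ∈ C.Nset g) :
    ⟪μ, β⟫_ℝ = 0 := by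
  simp only [Nset, Finset.mem_filter] at hβ
  obtain ⟨hβΦ, hβpos, hβneg⟩ := hβ
  have h1 : 0 ≤ ⟪μ, β⟫_ℝ := C.inner_nonneg_of_dominant hμ hβpos
  have h2 : ⟪μ, β⟫_ℝ = ⟪μ, g β⟫_ℝ := by
    calc ⟪μ, β⟫_ℝ = ⟪g μ, g β⟫_ℝ := (C.inner_invariant g hg μ β).symm
      _ = ⟪μ, g β⟫_ℝ := by rw [hfix]
  have h3 : ⟪μ, g β⟫_ℝ ≤ 0 := C.inner_nonpos_of_dominant_neg hμ hβneg
  linarith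

lemma Nset_mul {u g : V ≃ₗ[ℝ] V} {μ : V} (hu : u ∈ C.W) (hg : g ∈ C.W)
    (hμ : C.IsDominant μ) (hfix : g μ = μ) (hQ : C.Qp u μ) :
    (C.Nset (u * g)).card = (C.Nset u).card + (C.Nset g).card := by
  classical
  have mul_apply : ∀ β, (u * g) β = u (g β) := fun β => rfl
  have inv_apply : ∀ β, g (g⁻¹ β) = β := fun β => by
    have : (g * g⁻¹) β = β := by rw [mul_inv_cancel]; rfl
    exact this
  have hNg_orth : ∀ β ∈ C.Nset g, ⟪μ, β⟫_ℝ = 0 := fun β hβ =>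
    C.inner_zero_of_mem_Nset hg hμ hfix hβ
  have himg : C.Nset (u * g) = C.Nset g ∪ (C.Nset u).image (fun β => g⁻¹ β) := by
    ext β
    simp only [Nset, Finset.mem_union, Finset.mem_filter, Finset.mem_image]
    constructor
    · rintro ⟨hβΦ, hβpos, hβneg⟩
      rw [mul_apply] at hβneg
      by_cases hgb : C.IsNeg (g β)
      · exact Or.inl ⟨hβΦ, hβpos, hgb⟩
      · have hgβΦ : g β ∈ C.Φ := C.W_stable_root hg hβΦ
        have hgβpos := C.isPos_of_not_isNeg hgβΦ hgb
        refine Or.inr ⟨g β, ⟨hgβΦ, hgβpos, hβneg⟩, ?_⟩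
        have : g⁻¹ (g β) = β := g.injective (by rw [inv_apply])
        exact this
    · rintro (⟨hβΦ, hβpos, hβneg⟩ | ⟨γ, ⟨hγΦ, hγpos, hγneg⟩, rfl⟩)
      · -- β ∈ Nset g
        refine ⟨hβΦ, hβpos, ?_⟩
        rw [mul_apply]
        have horth : ⟪μ, -(g β)⟫_ℝ = 0 := by
          rw [inner_neg_right]
          have h2 : ⟪μ, g β⟫_ℝ = 0 := by
            have := hNg_orth β (by
              simp only [Nset, Finset.mem_filter]; exact ⟨hβΦ, hβpos, hβneg⟩)
            rw [← C.inner_invariant g hg μ β, hfix] at this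
            exact this
          rw [h2, neg_zero]
        have hpos' : C.IsPos (u (-(g β))) :=
          C.isPos_map_of_orth hQ hμ (C.isPos_neg_iff.2 hβneg) horth
        rw [map_neg] at hpos'
        exact C.isPos_neg_iff.1 hpos'
      · -- β = g⁻¹ γ with γ ∈ Nset u
        have hβΦ : g⁻¹ γ ∈ C.Φ := C.W_stable_root (inv_mem hg) hγΦ
        have hug : (u * g) (g⁻¹ γ) = u γ := by rw [mul_apply, inv_apply]
        refine ⟨hβΦ, ?_, by rwa [hug]⟩
        by_contra hneg
        have hβneg : C.IsNeg (g⁻¹ γ) := C.isNeg_of_not_isPos hβΦ hneg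
        have hmg : -(g⁻¹ γ) ∈ C.Nset g := by
          simp only [Nset, Finset.mem_filter]
          refine ⟨C.neg_mem_Phi hβΦ, C.isPos_neg_iff.2 hβneg, ?_⟩
          rw [map_neg, inv_apply]
          exact C.isNeg_neg_iff.2 hγpos
        have h0 : ⟪μ, -(g⁻¹ γ)⟫_ℝ = 0 := hNg_orth _ hmg
        have h0' : ⟪μ, γ⟫_ℝ = 0 := by
          have : ⟪μ, g⁻¹ γ⟫_ℝ = 0 := by
            rw [inner_neg_right] at h0; linarith
          calc ⟪μ, γ⟫_ℝ = ⟪μ, g (g⁻¹ γ)⟫_ℝ := by rw [inv_apply]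
            _ = ⟪g μ, g (g⁻¹ γ)⟫_ℝ := by rw [hfix]
            _ = ⟪μ, g⁻¹ γ⟫_ℝ := C.inner_invariant g hg μ (g⁻¹ γ)
            _ = 0 := this
        have := C.isPos_map_of_orth hQ hμ hγpos h0'
        exact C.not_isPos_and_isNeg
          (C.map_ne_zero' u (C.root_ne_zero γ hγΦ)) ⟨this, hγneg⟩
  have hdisj : Disjoint (C.Nset g) ((C.Nset u).image (fun β => g⁻¹ β)) := by
    rw [Finset.disjoint_left]
    intro β hβg hβi
    simp only [Nset, Finset.mem_filter] at hβg
    obtain ⟨γ, hγ, rfl⟩ := Finset.mem_image.1 hβi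
    simp only [Nset, Finset.mem_filter] at hγ
    have : g (g⁻¹ γ) = γ := inv_apply γ
    have hγpos : C.IsPos (g (g⁻¹ γ)) := by rw [this]; exact hγ.2.1
    exact C.not_isPos_and_isNeg
      (C.map_ne_zero' g (C.map_ne_zero' g⁻¹ (C.root_ne_zero γ hγ.1)))
      ⟨hγpos, hβg.2.2⟩
  rw [himg, Finset.card_union_of_disjoint hdisj,
    Finset.card_image_of_injective _ (fun a b hab => by
      exact g⁻¹.injective hab)]
  omega

lemma length_add {u g : V ≃ₗ[ℝ] V} {μ : V} (hu : u ∈ C.W) (hg : g ∈ C.W)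
    (hμ : C.IsDominant μ) (hfix : g μ = μ) (hQ : C.Qp u μ) :
    C.length (u * g) = C.length u + C.length g := by
  rw [C.length_eq_card (mul_mem hu hg), C.length_eq_card hu, C.length_eq_card hg]
  exact C.Nset_mul hu hg hμ hfix hQ

lemma Q_unique {u w : V ≃ₗ[ℝ] V} {μ : V} (hu : u ∈ C.W) (hw : w ∈ C.W)
    (hμ : C.IsDominant μ) (huw : u μ = w μ) (hQu : C.Qp u μ) (hQw : C.Qp w μ) :
    u = w := by
  set g := u⁻¹ * w with hgdef
  have hgW : g ∈ C.W := mul_mem (inv_mem hu) hw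
  have hfix : g μ = μ := by
    have h1 : g μ = u⁻¹ (w μ) := rfl
    rw [h1, ← huw]
    exact u.injective (by
      have : u (u⁻¹ (u μ)) = (u * u⁻¹) (u μ) := rfl
      rw [this, mul_inv_cancel]; rfl)
  have hug : u * g = w := by rw [hgdef, ← mul_assoc, mul_inv_cancel, one_mul]
  have h1 : C.length w = C.length u + C.length g := by
    rw [← hug]; exact C.length_add hu hgW hμ hfix hQu
  have hfix' : g⁻¹ μ = μ := by
    apply g.injective
    have : g (g⁻¹ μ) = (g * g⁻¹) μ := rfl
    rw [this, mul_inv_cancel, hfix]; rfl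
  have hwg : w * g⁻¹ = u := by
    rw [hgdef, mul_inv_rev, inv_inv, ← mul_assoc, mul_inv_cancel, one_mul]
  have h2 : C.length u = C.length w + C.length g⁻¹ := by
    rw [← hwg]; exact C.length_add hw (inv_mem hgW) hμ hfix' hQw
  have hg0 : C.length g = 0 := by omega
  have := C.eq_one_of_length_zero hgW hg0
  rw [hgdef] at this
  have : w = u * 1 := by rw [← this, ← mul_assoc, mul_inv_cancel, one_mul]
  rw [mul_one] at this
  exact this.symm

/-! ### Integrality and pairings -/

lemma pairing_add (x y α : V) : pairing (x + y) α = pairing x α + pairing y α := by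
  unfold pairing
  rw [inner_add_left]
  ring

lemma pairing_neg (x α : V) : pairing (-x) α = -pairing x α := by
  unfold pairing
  rw [inner_neg_left]
  ring

lemma pairing_zero (α : V) : pairing (0 : V) α = 0 := by
  unfold pairing
  rw [inner_zero_left]
  ring

lemma pairing_omega (i j : Fin C.r) :
    pairing (C.ω i) (C.π j) = if i = j then 1 else 0 := C.fund i j

lemma pairing_int {x : V} (hx : x ∈ C.X) (j : Fin C.r) :
    ∃ n : ℤ, pairing x (C.π j) = n := by
  rw [C.X_eq] at hx
  induction hx using AddSubgroup.closure_induction with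
  | mem y hy =>
      obtain ⟨i, rfl⟩ := hy
      rw [C.pairing_omega i j]
      by_cases h : i = j
      · exact ⟨1, by simp [h]⟩
      · exact ⟨0, by simp [h]⟩
  | zero => exact ⟨0, by rw [pairing_zero]; simp⟩
  | add x y _ _ ihx ihy =>
      obtain ⟨n, hn⟩ := ihx; obtain ⟨m, hm⟩ := ihy
      exact ⟨n + m, by rw [pairing_add, hn, hm]; push_cast; ring⟩
  | neg x _ ihx =>
      obtain ⟨n, hn⟩ := ihx
      exact ⟨-n, by rw [pairing_neg, hn]; push_cast; ring⟩

lemma pairing_sum_omega (S : Finset (Fin C.r)) (j : Fin C.r) :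
    pairing (∑ i ∈ S, C.ω i) (C.π j) = if j ∈ S then 1 else 0 := by
  classical
  induction S using Finset.induction with
  | empty => simp [pairing_zero]
  | insert a s hnotmem ih =>
      rw [Finset.sum_insert hnotmem, pairing_add, ih, C.pairing_omega]
      by_cases haj : a = j
      · subst haj
        simp [hnotmem, Finset.mem_insert]
      · simp only [if_neg haj, zero_add, Finset.mem_insert]
        by_cases hjs : j ∈ s
        · simp [hjs, Ne.symm haj]
        · simp [hjs, Ne.symm haj]

lemma eq_of_forall_pairing_eq {x y : V}
    (h : ∀ j, pairing x (C.π j) = pairing y (C.π j)) : x = y := by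
  have hinner : ∀ j, ⟪x - y, C.π j⟫_ℝ = 0 := by
    intro j
    have hj := h j
    unfold pairing at hj
    have hpos := C.inner_self_pos_of_mem (C.simple_mem j)
    rw [inner_sub_left]
    have : ⟪x, C.π j⟫_ℝ = ⟪y, C.π j⟫_ℝ := by
      field_simp at hj
      linarith
    linarith
  have hmem : x - y ∈ (Submodule.span ℝ (Set.range C.π))ᗮ := by
    rw [Submodule.mem_orthogonal]
    intro u hu
    induction hu using Submodule.span_induction with
    | mem z hz =>
        obtain ⟨j, rfl⟩ := hz
        rw [real_inner_comm]
        exact hinner j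
    | zero => simp
    | add a b _ _ iha ihb => rw [inner_add_left, iha, ihb, add_zero]
    | smul c a _ iha => rw [inner_smul_left, iha]; simp
  have hspan : Submodule.span ℝ (Set.range C.π) = ⊤ := le_antisymm le_top C.span_pi
  rw [hspan, Submodule.top_orthogonal_eq_bot, Submodule.mem_bot, sub_eq_zero] at hmem
  exact hmem

end Aux

end RootSystemData

/-- Let `λ ∈ X`, let `λ⁺` be the dominant weight in the `W`-orbit of `λ`,
and let `w` be of minimal length with `λ = wλ⁺`.  Then `λ` is a Steinberg weight (and then
necessarily `λ = e_{w⁻¹}`) iff `(λ⁺, α_j∨) ≤ 1` for every simple `α_j`, and `w(α_j)` is a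
negative root whenever `(λ⁺, α_j∨) = 1`. -/
theorem statement_8
    {V : Type} [NormedAddCommGroup V] [InnerProductSpace ℝ V] [FiniteDimensional ℝ V]
    (C : RootSystemData V)
    (lam lamPlus : V) (hlamX : lam ∈ C.X)
    (hdom : C.IsDominant lamPlus)
    (w : V ≃ₗ[ℝ] V) (hw : w ∈ C.W) (hlam : lam = w lamPlus)
    (hmin : ∀ u ∈ C.W, u lamPlus = lam → C.length w ≤ C.length u) :
    ((∃ v ∈ C.W, lam = C.steinberg v) ↔
        ∀ j : Fin C.r, pairing lamPlus (C.π j) ≤ 1 ∧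
          (pairing lamPlus (C.π j) = 1 → C.IsNeg (w (C.π j)))) ∧
    (∀ v ∈ C.W, lam = C.steinberg v → v = w⁻¹) := by
  classical
  have hsW : ∀ i, C.s (C.π i) ∈ C.W := fun i => C.s_mem_W (C.simple_mem i)
  have hlamPlusX : lamPlus ∈ C.X := by
    have h1 : w⁻¹ lam = lamPlus := by
      rw [hlam]; exact w.symm_apply_apply lamPlus
    rw [← h1]
    exact C.X_stable w⁻¹ (inv_mem hw) lam hlamX
  have hQw : C.Qp w lamPlus := by
    intro j hj
    by_contra hneg
    have hmem : w (C.π j) ∈ C.Φ := C.W_stable_root hw (C.simple_mem j)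
    have hn : C.IsNeg (w (C.π j)) := C.isNeg_of_not_isPos hmem hneg
    have hlt := C.length_lt_of_isNeg hw hn
    have hfixj : C.s (C.π j) lamPlus = lamPlus := C.s_fix ((C.pairing_zero_iff j).1 hj)
    have happ : (w * C.s (C.π j)) lamPlus = lam := by
      have h2 : (w * C.s (C.π j)) lamPlus = w (C.s (C.π j) lamPlus) := rfl
      rw [h2, hfixj, ← hlam]
    exact absurd (hmin _ (mul_mem hw (hsW j)) happ) (by omega)
  have huniq : ∀ v ∈ C.W, lam = C.steinberg v → v = w⁻¹ := by
    intro v hv hsv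
    set S := Finset.univ.filter (fun i => C.IsNeg (v⁻¹ (C.π i))) with hS
    set μ := ∑ i ∈ S, C.ω i with hμdef
    have hst : C.steinberg v = v⁻¹ μ := rfl
    have hμdom : C.IsDominant μ := by
      intro i
      rw [hμdef, C.pairing_sum_omega]
      split <;> norm_num
    have hu : v⁻¹ ∈ C.W := inv_mem hv
    have hμeq : μ = lamPlus := by
      refine C.dominant_unique (g := w⁻¹ * v⁻¹)
        (mul_mem (inv_mem hw) hu) hμdom hdom ?_
      show (w⁻¹ * v⁻¹) μ = lamPlus
      have h1 : (w⁻¹ * v⁻¹) μ = w⁻¹ (v⁻¹ μ) := rfl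
      rw [h1, ← hst, ← hsv, hlam]
      exact w.symm_apply_apply lamPlus
    have hQu : C.Qp v⁻¹ lamPlus := by
      intro j hj
      have hjS : j ∉ S := by
        intro hjS
        have h2 := C.pairing_sum_omega S j
        rw [← hμdef, hμeq, hj, if_pos hjS] at h2
        norm_num at h2
      have hmem : v⁻¹ (C.π j) ∈ C.Φ := C.W_stable_root hu (C.simple_mem j)
      apply C.isPos_of_not_isNeg hmem
      intro hne
      exact hjS (Finset.mem_filter.2 ⟨Finset.mem_univ j, hne⟩)
    have huw : v⁻¹ lamPlus = w lamPlus := by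
      rw [← hμeq, ← hst, ← hsv, hlam, hμeq]
    have hveq := C.Q_unique hu hw hdom huw hQu hQw
    rw [← hveq, inv_inv]
  constructor
  · constructor
    · rintro ⟨v, hv, hsv⟩
      have hveq := huniq v hv hsv
      subst hveq
      have hst : lam = w (∑ i ∈ Finset.univ.filter
          (fun i => C.IsNeg (w (C.π i))), C.ω i) := by
        rw [hsv]; simp only [RootSystemData.steinberg, inv_inv]
      have hsum : lamPlus = ∑ i ∈ Finset.univ.filter
          (fun i => C.IsNeg (w (C.π i))), C.ω i := by
        apply w.injective
        rw [← hlam, ← hst]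
      intro j
      constructor
      · rw [hsum, C.pairing_sum_omega]; split <;> norm_num
      · intro h1
        rw [hsum, C.pairing_sum_omega] at h1
        by_cases h : j ∈ Finset.univ.filter (fun i => C.IsNeg (w (C.π i)))
        · exact (Finset.mem_filter.1 h).2
        · rw [if_neg h] at h1; norm_num at h1
    · intro hcond
      refine ⟨w⁻¹, inv_mem hw, ?_⟩
      set T := Finset.univ.filter (fun i => pairing lamPlus (C.π i) = 1) with hT
      have h01 : ∀ j, pairing lamPlus (C.π j) = 0 ∨ pairing lamPlus (C.π j) = 1 := by
        intro j
        obtain ⟨n, hn⟩ := C.pairing_int hlamPlusX j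
        have h0 := hdom j
        have h1 := (hcond j).1
        rw [hn] at h0 h1 ⊢
        have hn0 : 0 ≤ n := by exact_mod_cast h0
        have hn1 : n ≤ 1 := by exact_mod_cast h1
        interval_cases n
        · left; norm_num
        · right; norm_num
      have hTS : ∀ i, C.IsNeg (w (C.π i)) ↔ pairing lamPlus (C.π i) = 1 := by
        intro i
        constructor
        · intro hni
          rcases h01 i with h | h
          · exact absurd ⟨hQw i h, hni⟩ (C.not_isPos_and_isNeg
              (C.map_ne_zero' w (C.pi_ne_zero i)))
          · exact h
        · intro h; exact (hcond i).2 h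
      have hlamPlus_eq : lamPlus = ∑ i ∈ T, C.ω i := by
        apply C.eq_of_forall_pairing_eq
        intro j
        rw [C.pairing_sum_omega]
        rcases h01 j with h | h
        · rw [h, if_neg]
          intro hj
          rw [hT, Finset.mem_filter] at hj
          rw [hj.2] at h
          norm_num at h
        · rw [h, if_pos]
          rw [hT, Finset.mem_filter]
          exact ⟨Finset.mem_univ j, h⟩
      show lam = C.steinberg w⁻¹
      have hstw : C.steinberg w⁻¹ = w (∑ i ∈ Finset.univ.filter
          (fun i => C.IsNeg (w (C.π i))), C.ω i) := by
        simp only [RootSystemData.steinberg, inv_inv]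
      rw [hstw]
      have hfilter : Finset.univ.filter (fun i => C.IsNeg (w (C.π i))) = T := by
        ext i
        rw [hT, Finset.mem_filter, Finset.mem_filter]
        simp only [Finset.mem_univ, true_and]
        exact hTS i
      rw [hfilter, ← hlamPlus_eq, ← hlam]
  · exact huniq
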